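/- The strong negation is definable in 2Int: writing N(A) := (A ∧ (A → (A ⤙ A))) ∨ ((A → A) ⤙ A), the four rules for strong negation are derivable for N(A), i.e. for all formulas A and all sets of assumptions Γ and counter-assumptions Δ: (i) if (Γ;Δ) ⊢⁻ A then (Γ;Δ) ⊢⁺ N(A); (ii) if (Γ;Δ) ⊢⁺ A then (Γ;Δ) ⊢⁻ N(A); (iii) if (Γ;Δ) ⊢⁺ N(A) then (Γ;Δ) ⊢⁻ A; and (iv) if (Γ;Δ) ⊢⁻ N(A) then (Γ;Δ) ⊢⁺ A. -/
import Mathlib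


/-- Formulas of Wansing's bi-intuitionistic logic 2Int. -/
inductive TwoInt : Type
  | atom  : ℕ → TwoInt
  | top   : TwoInt
  | bot   : TwoInt
  | and   : TwoInt → TwoInt → TwoInt
  | or    : TwoInt → TwoInt → TwoInt
  | imp   : TwoInt → TwoInt → TwoInt
  | coimp : TwoInt → TwoInt → TwoInt

open TwoInt

mutual
/-- Proofs in 2Int: `ProvesP Γ Δ A` means `(Γ;Δ) ⊢⁺ A`. -/
inductive ProvesP : Set TwoInt → Set TwoInt → TwoInt → Prop
  | assum {Γ Δ A} : A ∈ Γ → ProvesP Γ Δ A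
  | topI {Γ Δ} : ProvesP Γ Δ top
  | botE_p {Γ Δ A} : ProvesP Γ Δ bot → ProvesP Γ Δ A
  | topE_p {Γ Δ A} : ProvesD Γ Δ top → ProvesP Γ Δ A
  | andI_p {Γ Δ A B} : ProvesP Γ Δ A → ProvesP Γ Δ B → ProvesP Γ Δ (and A B)
  | andE1_p {Γ Δ A B} : ProvesP Γ Δ (and A B) → ProvesP Γ Δ A
  | andE2_p {Γ Δ A B} : ProvesP Γ Δ (and A B) → ProvesP Γ Δ B
  | orI1_p {Γ Δ A B} : ProvesP Γ Δ A → ProvesP Γ Δ (or A B)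
  | orI2_p {Γ Δ A B} : ProvesP Γ Δ B → ProvesP Γ Δ (or A B)
  | orE_p {Γ Δ A B C} : ProvesP Γ Δ (or A B) → ProvesP (Γ ∪ {A}) Δ C →
      ProvesP (Γ ∪ {B}) Δ C → ProvesP Γ Δ C
  | andE_p {Γ Δ A B C} : ProvesD Γ Δ (and A B) → ProvesP Γ (Δ ∪ {A}) C →
      ProvesP Γ (Δ ∪ {B}) C → ProvesP Γ Δ C
  | impI_p {Γ Δ A B} : ProvesP (Γ ∪ {A}) Δ B → ProvesP Γ Δ (imp A B)
  | impE_p {Γ Δ A B} : ProvesP Γ Δ (imp A B) → ProvesP Γ Δ A → ProvesP Γ Δ B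
  | impE1_m {Γ Δ A B} : ProvesD Γ Δ (imp A B) → ProvesP Γ Δ A
  | coimpI_p {Γ Δ A B} : ProvesP Γ Δ A → ProvesD Γ Δ B → ProvesP Γ Δ (coimp A B)
  | coimpE1_p {Γ Δ A B} : ProvesP Γ Δ (coimp A B) → ProvesP Γ Δ A

/-- Dual proofs in 2Int: `ProvesD Γ Δ A` means `(Γ;Δ) ⊢⁻ A`. -/
inductive ProvesD : Set TwoInt → Set TwoInt → TwoInt → Prop
  | cassum {Γ Δ A} : A ∈ Δ → ProvesD Γ Δ A
  | botI {Γ Δ} : ProvesD Γ Δ bot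
  | botE_m {Γ Δ A} : ProvesP Γ Δ bot → ProvesD Γ Δ A
  | topE_m {Γ Δ A} : ProvesD Γ Δ top → ProvesD Γ Δ A
  | andI1_m {Γ Δ A B} : ProvesD Γ Δ A → ProvesD Γ Δ (and A B)
  | andI2_m {Γ Δ A B} : ProvesD Γ Δ B → ProvesD Γ Δ (and A B)
  | andE_m {Γ Δ A B C} : ProvesD Γ Δ (and A B) → ProvesD Γ (Δ ∪ {A}) C →
      ProvesD Γ (Δ ∪ {B}) C → ProvesD Γ Δ C
  | orE_m {Γ Δ A B C} : ProvesP Γ Δ (or A B) → ProvesD (Γ ∪ {A}) Δ C →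
      ProvesD (Γ ∪ {B}) Δ C → ProvesD Γ Δ C
  | orI_m {Γ Δ A B} : ProvesD Γ Δ A → ProvesD Γ Δ B → ProvesD Γ Δ (or A B)
  | orE1_m {Γ Δ A B} : ProvesD Γ Δ (or A B) → ProvesD Γ Δ A
  | orE2_m {Γ Δ A B} : ProvesD Γ Δ (or A B) → ProvesD Γ Δ B
  | impI_m {Γ Δ A B} : ProvesP Γ Δ A → ProvesD Γ Δ B → ProvesD Γ Δ (imp A B)
  | impE2_m {Γ Δ A B} : ProvesD Γ Δ (imp A B) → ProvesD Γ Δ B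
  | coimpE2_p {Γ Δ A B} : ProvesP Γ Δ (coimp A B) → ProvesD Γ Δ B
  | coimpI_m {Γ Δ A B} : ProvesD Γ (Δ ∪ {B}) A → ProvesD Γ Δ (coimp A B)
  | coimpE_m {Γ Δ A B} : ProvesD Γ Δ (coimp A B) → ProvesD Γ Δ B → ProvesD Γ Δ A
end

/-- The defining formula `N(A) := (A ∧ (A → (A ⤙ A))) ∨ ((A → A) ⤙ A)` for strong negation. -/
def strongNeg (A : TwoInt) : TwoInt :=
  or (and A (imp A (coimp A A))) (coimp (imp A A) A)

set_option linter.unreachableTactic false in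
set_option linter.unnecessarySeqFocus false in
set_option linter.unusedTactic false in
theorem weak2int :
    (∀ Γ Δ A, ProvesP Γ Δ A → ∀ Γ' Δ', Γ ⊆ Γ' → Δ ⊆ Δ' → ProvesP Γ' Δ' A) ∧
    (∀ Γ Δ A, ProvesD Γ Δ A → ∀ Γ' Δ', Γ ⊆ Γ' → Δ ⊆ Δ' → ProvesD Γ' Δ' A) := by
  have H : ∀ (Γ Γ' : Set TwoInt) (X : TwoInt), Γ ⊆ Γ' → Γ ∪ {X} ⊆ Γ' ∪ {X} :=
    fun _ _ _ h => Set.union_subset_union h (subset_refl _)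
  constructor
  · intro Γ Δ A h
    induction h using ProvesP.rec
      (motive_2 := fun Γ Δ A _ => ∀ Γ' Δ', Γ ⊆ Γ' → Δ ⊆ Δ' → ProvesD Γ' Δ' A)
    case assum => intros; apply ProvesP.assum <;> solve_by_elim [H]
    case topI => intros; apply ProvesP.topI <;> solve_by_elim [H]
    case botE_p => intros; apply ProvesP.botE_p <;> solve_by_elim [H]
    case topE_p => intros; apply ProvesP.topE_p <;> solve_by_elim [H]
    case andI_p => intros; apply ProvesP.andI_p <;> solve_by_elim [H]
    case andE1_p => intros; apply ProvesP.andE1_p <;> solve_by_elim [H]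
    case andE2_p => intros; apply ProvesP.andE2_p <;> solve_by_elim [H]
    case orI1_p => intros; apply ProvesP.orI1_p <;> solve_by_elim [H]
    case orI2_p => intros; apply ProvesP.orI2_p <;> solve_by_elim [H]
    case orE_p => intros; apply ProvesP.orE_p <;> solve_by_elim [H]
    case andE_p => intros; apply ProvesP.andE_p <;> solve_by_elim [H]
    case impI_p => intros; apply ProvesP.impI_p <;> solve_by_elim [H]
    case impE_p => intros; apply ProvesP.impE_p <;> solve_by_elim [H]
    case impE1_m => intros; apply ProvesP.impE1_m <;> solve_by_elim [H]
    case coimpI_p => intros; apply ProvesP.coimpI_p <;> solve_by_elim [H]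
    case coimpE1_p => intros; apply ProvesP.coimpE1_p <;> solve_by_elim [H]
    case cassum => intros; apply ProvesD.cassum <;> solve_by_elim [H]
    case botI => intros; apply ProvesD.botI <;> solve_by_elim [H]
    case botE_m => intros; apply ProvesD.botE_m <;> solve_by_elim [H]
    case topE_m => intros; apply ProvesD.topE_m <;> solve_by_elim [H]
    case andI1_m => intros; apply ProvesD.andI1_m <;> solve_by_elim [H]
    case andI2_m => intros; apply ProvesD.andI2_m <;> solve_by_elim [H]
    case andE_m => intros; apply ProvesD.andE_m <;> solve_by_elim [H]
    case orE_m => intros; apply ProvesD.orE_m <;> solve_by_elim [H]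
    case orI_m => intros; apply ProvesD.orI_m <;> solve_by_elim [H]
    case orE1_m => intros; apply ProvesD.orE1_m <;> solve_by_elim [H]
    case orE2_m => intros; apply ProvesD.orE2_m <;> solve_by_elim [H]
    case impI_m => intros; apply ProvesD.impI_m <;> solve_by_elim [H]
    case impE2_m => intros; apply ProvesD.impE2_m <;> solve_by_elim [H]
    case coimpE2_p => intros; apply ProvesD.coimpE2_p <;> solve_by_elim [H]
    case coimpI_m => intros; apply ProvesD.coimpI_m <;> solve_by_elim [H]
    case coimpE_m => intros; apply ProvesD.coimpE_m <;> solve_by_elim [H]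
  · intro Γ Δ A h
    induction h using ProvesD.rec
      (motive_1 := fun Γ Δ A _ => ∀ Γ' Δ', Γ ⊆ Γ' → Δ ⊆ Δ' → ProvesP Γ' Δ' A)
    case assum => intros; apply ProvesP.assum <;> solve_by_elim [H]
    case topI => intros; apply ProvesP.topI <;> solve_by_elim [H]
    case botE_p => intros; apply ProvesP.botE_p <;> solve_by_elim [H]
    case topE_p => intros; apply ProvesP.topE_p <;> solve_by_elim [H]
    case andI_p => intros; apply ProvesP.andI_p <;> solve_by_elim [H]
    case andE1_p => intros; apply ProvesP.andE1_p <;> solve_by_elim [H]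
    case andE2_p => intros; apply ProvesP.andE2_p <;> solve_by_elim [H]
    case orI1_p => intros; apply ProvesP.orI1_p <;> solve_by_elim [H]
    case orI2_p => intros; apply ProvesP.orI2_p <;> solve_by_elim [H]
    case orE_p => intros; apply ProvesP.orE_p <;> solve_by_elim [H]
    case andE_p => intros; apply ProvesP.andE_p <;> solve_by_elim [H]
    case impI_p => intros; apply ProvesP.impI_p <;> solve_by_elim [H]
    case impE_p => intros; apply ProvesP.impE_p <;> solve_by_elim [H]
    case impE1_m => intros; apply ProvesP.impE1_m <;> solve_by_elim [H]
    case coimpI_p => intros; apply ProvesP.coimpI_p <;> solve_by_elim [H]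
    case coimpE1_p => intros; apply ProvesP.coimpE1_p <;> solve_by_elim [H]
    case cassum => intros; apply ProvesD.cassum <;> solve_by_elim [H]
    case botI => intros; apply ProvesD.botI <;> solve_by_elim [H]
    case botE_m => intros; apply ProvesD.botE_m <;> solve_by_elim [H]
    case topE_m => intros; apply ProvesD.topE_m <;> solve_by_elim [H]
    case andI1_m => intros; apply ProvesD.andI1_m <;> solve_by_elim [H]
    case andI2_m => intros; apply ProvesD.andI2_m <;> solve_by_elim [H]
    case andE_m => intros; apply ProvesD.andE_m <;> solve_by_elim [H]
    case orE_m => intros; apply ProvesD.orE_m <;> solve_by_elim [H]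
    case orI_m => intros; apply ProvesD.orI_m <;> solve_by_elim [H]
    case orE1_m => intros; apply ProvesD.orE1_m <;> solve_by_elim [H]
    case orE2_m => intros; apply ProvesD.orE2_m <;> solve_by_elim [H]
    case impI_m => intros; apply ProvesD.impI_m <;> solve_by_elim [H]
    case impE2_m => intros; apply ProvesD.impE2_m <;> solve_by_elim [H]
    case coimpE2_p => intros; apply ProvesD.coimpE2_p <;> solve_by_elim [H]
    case coimpI_m => intros; apply ProvesD.coimpI_m <;> solve_by_elim [H]
    case coimpE_m => intros; apply ProvesD.coimpE_m <;> solve_by_elim [H]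

lemma mem_union_singleton (S : Set TwoInt) (X : TwoInt) : X ∈ S ∪ {X} :=
  Set.mem_union_right _ rfl

theorem strongNeg_definable_in_2Int :
    ∀ (A : TwoInt) (Γ Δ : Set TwoInt),
      (ProvesD Γ Δ A → ProvesP Γ Δ (strongNeg A)) ∧
      (ProvesP Γ Δ A → ProvesD Γ Δ (strongNeg A)) ∧
      (ProvesP Γ Δ (strongNeg A) → ProvesD Γ Δ A) ∧
      (ProvesD Γ Δ (strongNeg A) → ProvesP Γ Δ A) := by
  obtain ⟨wP, wD⟩ := weak2int
  intro A Γ Δ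
  refine ⟨fun h => ?_, fun h => ?_, fun h => ?_, fun h => ?_⟩
  · -- (i) ⊢⁻ A ⇒ ⊢⁺ N(A)
    exact ProvesP.orI2_p (ProvesP.coimpI_p
      (ProvesP.impI_p (ProvesP.assum (mem_union_singleton Γ A))) h)
  · -- (ii) ⊢⁺ A ⇒ ⊢⁻ N(A)
    refine ProvesD.orI_m ?_ ?_
    · exact ProvesD.andI2_m (ProvesD.impI_m h
        (ProvesD.coimpI_m (ProvesD.cassum (mem_union_singleton Δ A))))
    · refine ProvesD.coimpI_m (ProvesD.impI_m ?_ (ProvesD.cassum (mem_union_singleton Δ A)))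
      exact wP Γ Δ A h Γ (Δ ∪ {A}) (subset_refl _) Set.subset_union_left
  · -- (iii) ⊢⁺ N(A) ⇒ ⊢⁻ A
    refine ProvesD.orE_m h ?_ ?_
    · have hL : ProvesP (Γ ∪ {and A (imp A (coimp A A))}) Δ (and A (imp A (coimp A A))) :=
        ProvesP.assum (mem_union_singleton Γ _)
      exact ProvesD.coimpE2_p (ProvesP.impE_p (ProvesP.andE2_p hL) (ProvesP.andE1_p hL))
    · exact ProvesD.coimpE2_p (ProvesP.assum (mem_union_singleton Γ _))
  · -- (iv) ⊢⁻ N(A) ⇒ ⊢⁺ A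
    have hL := ProvesD.orE1_m h
    have hR := ProvesD.orE2_m h
    refine ProvesP.andE_p hL ?_ ?_
    · have hR' : ProvesD Γ (Δ ∪ {A}) (coimp (imp A A) A) :=
        wD Γ Δ _ hR Γ (Δ ∪ {A}) (subset_refl _) Set.subset_union_left
      exact ProvesP.impE1_m (ProvesD.coimpE_m hR' (ProvesD.cassum (mem_union_singleton Δ A)))
    · exact ProvesP.impE1_m (ProvesD.cassum (mem_union_singleton Δ _))
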